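/- Let L be a g-dimensional rational subspace of ℝ^{n+1} (i.e., spanned by integer vectors) and let L⊥ be its orthogonal complement. Then Λ = L ∩ ℤ^{n+1} is a lattice of full rank g in L, Λ⊥ = L⊥ ∩ ℤ^{n+1} is a lattice of full rank n+1−g in L⊥, and the covolumes satisfy covol(L/Λ) = covol(L⊥/Λ⊥). -/

import Mathlib

open Matrix Module

/-- ℤ-linearly independent integer vectors are ℝ-linearly independent after casting. -/
lemma int_li_real {N k : ℕ} {w : Fin k → (Fin N → ℤ)} (h : LinearIndependent ℤ w) :
    LinearIndependent ℝ (fun i => (fun j => ((w i j : ℝ))) : Fin k → (Fin N → ℝ)) := by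
  classical
  set wq : Fin k → (Fin N → ℚ) := fun i j => (w i j : ℚ) with hwq
  have hqc : LinearIndependent ℤ wq := by
    let qc : (Fin N → ℤ) →ₗ[ℤ] (Fin N → ℚ) :=
      { toFun := fun z j => (z j : ℚ)
        map_add' := by intro x y; funext j; simp
        map_smul' := by intro m x; funext j; simp }
    have := h.map' qc (by
      rw [LinearMap.ker_eq_bot']
      intro x hx
      funext j
      have h3 : (x j : ℚ) = 0 := congrFun hx j
      exact_mod_cast h3)
    exact this
  have h2 : LinearIndependent ℚ wq := (LinearIndependent.iff_fractionRing ℤ ℚ).mp hqc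
  let f : (Fin k → ℚ) →ₗ[ℚ] (Fin N → ℚ) := (Matrix.of fun j i => wq i j).mulVecLin
  have hf : ∀ c, f c = ∑ i, c i • wq i := by
    intro c; funext j
    simp [f, Matrix.mulVec, dotProduct, Finset.sum_apply, Pi.smul_apply, mul_comm]
  have hker : LinearMap.ker f = ⊥ := by
    rw [LinearMap.ker_eq_bot']
    intro c hc
    rw [hf] at hc
    funext i
    exact Fintype.linearIndependent_iff.mp h2 c hc i
  obtain ⟨φ, hφ⟩ := LinearMap.exists_leftInverse_of_injective f hker
  have hφw : ∀ i, φ (wq i) = Pi.single i 1 := by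
    intro i
    have h1 : f (Pi.single i 1) = wq i := by
      rw [hf]; simp [Pi.single_apply]
    rw [← h1]
    have := congrFun (congrArg (fun (g : _ →ₗ[ℚ] _) => (g : (Fin k → ℚ) → (Fin k → ℚ))) hφ) (Pi.single i 1)
    simpa using this
  have key : ∀ i i' : Fin k, ∑ c, wq i' c * φ (Pi.single c 1) i = if i' = i then 1 else 0 := by
    intro i i'
    have hx : wq i' = ∑ c, wq i' c • (Pi.single c (1:ℚ) : Fin N → ℚ) := by
      funext j; simp [Pi.single_apply, Finset.sum_apply]
    calc ∑ c, wq i' c * φ (Pi.single c 1) i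
        = φ (∑ c, wq i' c • (Pi.single c (1:ℚ) : Fin N → ℚ)) i := by
          rw [map_sum]; simp [Finset.sum_apply]
      _ = φ (wq i') i := by rw [← hx]
      _ = if i' = i then 1 else 0 := by rw [hφw]; simp [Pi.single_apply, eq_comm]
  rw [Fintype.linearIndependent_iff]
  intro r hr i0
  have hrj : ∀ j, ∑ i, r i * (w i j : ℝ) = 0 := by
    intro j
    have := congrFun hr j
    simpa [Finset.sum_apply] using this
  have keyR : ∀ i : Fin k, ∑ c, (w i c : ℝ) * ((φ (Pi.single c 1) i0 : ℚ) : ℝ)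
      = if i = i0 then 1 else 0 := by
    intro i
    have h4 := congrArg (fun q : ℚ => (q : ℝ)) (key i0 i)
    simp only [Rat.cast_sum] at h4
    rw [apply_ite ((↑) : ℚ → ℝ)] at h4
    push_cast at h4
    simpa [hwq] using h4
  have swap : ∑ i, r i * ∑ c, (w i c : ℝ) * ((φ (Pi.single c 1) i0 : ℚ) : ℝ)
      = ∑ c, ((φ (Pi.single c 1) i0 : ℚ) : ℝ) * ∑ i, r i * (w i c : ℝ) := by
    simp_rw [Finset.mul_sum]
    rw [Finset.sum_comm]
    apply Finset.sum_congr rfl; intros c _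
    apply Finset.sum_congr rfl; intros i _
    ring
  calc r i0 = ∑ i, r i * (if i = i0 then 1 else 0) := by simp
    _ = ∑ i, r i * ∑ c, (w i c : ℝ) * ((φ (Pi.single c 1) i0 : ℚ) : ℝ) := by
        simp_rw [keyR]
    _ = 0 := by rw [swap]; simp [hrj]

theorem rational_subspace_dual_covolume (n g : ℕ) (hg : 1 ≤ g) (hgn : g ≤ n + 1)
    (L : Submodule ℝ (EuclideanSpace ℝ (Fin (n + 1))))
    (hL : ∃ b : Fin g → (Fin (n + 1) → ℤ),
      LinearIndependent ℝ (fun i => (WithLp.toLp 2 (fun j => (b i j : ℝ)) : EuclideanSpace ℝ (Fin (n + 1)))) ∧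
      L = Submodule.span ℝ
        (Set.range fun i => (WithLp.toLp 2 (fun j => (b i j : ℝ)) : EuclideanSpace ℝ (Fin (n + 1))))) :
    ∃ (u : Fin g → (Fin (n + 1) → ℤ)) (v : Fin (n + 1 - g) → (Fin (n + 1) → ℤ)),
      -- Λ = L ∩ ℤ^{n+1} is a lattice of full rank g in L, with ℤ-basis u
      LinearIndependent ℝ (fun i => (WithLp.toLp 2 (fun j => (u i j : ℝ)) : EuclideanSpace ℝ (Fin (n + 1)))) ∧
      (∀ i, (WithLp.toLp 2 (fun j => (u i j : ℝ)) : EuclideanSpace ℝ (Fin (n + 1))) ∈ L) ∧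
      (∀ z : Fin (n + 1) → ℤ,
        (WithLp.toLp 2 (fun j => (z j : ℝ)) : EuclideanSpace ℝ (Fin (n + 1))) ∈ L →
        ∃ c : Fin g → ℤ, z = ∑ i, c i • u i) ∧
      -- Λ⊥ = L⊥ ∩ ℤ^{n+1} is a lattice of full rank n+1-g in L⊥, with ℤ-basis v
      LinearIndependent ℝ (fun i => (WithLp.toLp 2 (fun j => (v i j : ℝ)) : EuclideanSpace ℝ (Fin (n + 1)))) ∧
      (∀ i, (WithLp.toLp 2 (fun j => (v i j : ℝ)) : EuclideanSpace ℝ (Fin (n + 1))) ∈ Lᗮ) ∧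
      (∀ z : Fin (n + 1) → ℤ,
        (WithLp.toLp 2 (fun j => (z j : ℝ)) : EuclideanSpace ℝ (Fin (n + 1))) ∈ Lᗮ →
        ∃ c : Fin (n + 1 - g) → ℤ, z = ∑ i, c i • v i) ∧
      -- equality of covolumes, expressed via Gram determinants of the ℤ-bases
      Matrix.det (Matrix.of fun i i' => ∑ j, (u i j : ℝ) * (u i' j : ℝ)) =
        Matrix.det (Matrix.of fun i i' => ∑ j, (v i j : ℝ) * (v i' j : ℝ)) := by
  classical
  obtain ⟨b, hbli, hbspan⟩ := hL
  -- the casting linear map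
  let rc : (Fin (n+1) → ℤ) →ₗ[ℤ] EuclideanSpace ℝ (Fin (n+1)) :=
    { toFun := fun z => WithLp.toLp 2 (fun j => (z j : ℝ))
      map_add' := by intro x y; ext j; exact Int.cast_add (x j) (y j)
      map_smul' := by
        intro m x; ext j
        show ((m * x j : ℤ) : ℝ) = m • ((x j : ℝ))
        rw [zsmul_eq_mul]; push_cast; ring }
  -- the lattice Λ = L ∩ ℤ^{n+1}
  let Λ : Submodule ℤ (Fin (n+1) → ℤ) := Submodule.comap rc (Submodule.restrictScalars ℤ L)
  have memΛ : ∀ z : Fin (n+1) → ℤ, z ∈ Λ ↔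
      (WithLp.toLp 2 (fun j => (z j : ℝ)) : EuclideanSpace ℝ (Fin (n+1))) ∈ L := fun z => Iff.rfl
  have hbmemΛ : ∀ i, b i ∈ Λ := by
    intro i
    rw [memΛ, hbspan]
    exact Submodule.subset_span ⟨i, rfl⟩
  -- Smith normal form
  obtain ⟨m, bM, bN, f, a, hsnf⟩ := Submodule.smithNormalForm (Pi.basisFun ℤ (Fin (n+1))) Λ
  -- each `a i` is a unit
  have ha_unit : ∀ i, IsUnit (a i) := by
    intro i
    have hane : a i ≠ 0 := by
      intro h0
      have h1 : (bN i : Fin (n+1) → ℤ) = 0 := by rw [hsnf i, h0, zero_smul]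
      exact Basis.ne_zero bN i (Subtype.ext h1)
    have hmem : bM (f i) ∈ Λ := by
      show rc (bM (f i)) ∈ Submodule.restrictScalars ℤ L
      have h1 : rc ((bN i : Fin (n+1) → ℤ)) ∈ L := (bN i).2
      rw [hsnf i, LinearMap.map_smul, ← Int.cast_smul_eq_zsmul ℝ] at h1
      have h2 := L.smul_mem ((a i : ℝ))⁻¹ h1
      rwa [inv_smul_smul₀ (by exact_mod_cast hane)] at h2
    have hrepr := Basis.sum_repr bN ⟨bM (f i), hmem⟩
    have hco := congrArg (Submodule.subtype Λ) hrepr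
    rw [map_sum] at hco
    simp only [_root_.map_smul, Submodule.coe_subtype] at hco
    have hco2 : ∑ j, ((bN.repr ⟨bM (f i), hmem⟩ j) * a j) • bM (f j) = bM (f i) := by
      conv_rhs => rw [← hco]
      apply Finset.sum_congr rfl
      intro j _
      rw [hsnf j, smul_smul]
    have hcoe := congrArg (fun x => bM.repr x (f i)) hco2
    simp only [map_sum, _root_.map_smul, Basis.repr_self, Finsupp.smul_single, smul_eq_mul,
      mul_one, Finset.sum_apply', Finsupp.single_apply, f.injective.eq_iff,
      Basis.repr_self_apply, if_pos] at hcoe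
    rw [Finset.sum_ite_eq' Finset.univ i (fun j => bN.repr ⟨bM (f i), hmem⟩ j * a j)] at hcoe
    simp only [Finset.mem_univ, if_true] at hcoe
    exact IsUnit.of_mul_eq_one _ ((mul_comm _ _).trans hcoe)
  -- modify the basis by units so that `bM2 (f i) = bN i`
  let ε : Fin (n+1) → ℤˣ := fun j => if h : ∃ i, f i = j then (ha_unit h.choose).unit else 1
  let bM2 := bM.unitsSMul ε
  have hbM2 : ∀ i, bM2 (f i) = (bN i : Fin (n+1) → ℤ) := by
    intro i
    have hex : ∃ i', f i' = f i := ⟨i, rfl⟩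
    have hch : hex.choose = i := f.injective hex.choose_spec
    rw [show bM2 (f i) = ε (f i) • bM (f i) from bM.unitsSMul_apply (f i)]
    simp only [ε, dif_pos hex, hch]
    rw [hsnf i, Units.smul_def, IsUnit.unit_spec]
  -- m = g
  haveI hfinΛ : Module.Finite ℤ Λ := Module.Finite.of_basis bN
  have hu0 : LinearIndependent ℤ (fun i => (bN i : Fin (n+1) → ℤ)) :=
    bN.linearIndependent.map' Λ.subtype (Submodule.ker_subtype Λ)
  have hu0R := (int_li_real hu0).map' (WithLp.linearEquiv 2 ℝ (Fin (n+1) → ℝ)).symm.toLinearMap (LinearEquiv.ker _)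
  have hfrL : finrank ℝ L = g := by
    rw [hbspan]
    simpa using finrank_span_eq_card hbli
  have hmg : g = m := by
    have hmemL : ∀ i, (WithLp.toLp 2 (fun j => ((bN i : Fin (n+1) → ℤ) j : ℝ)) :
        EuclideanSpace ℝ (Fin (n+1))) ∈ L := fun i => (bN i).2
    have hw : LinearIndependent ℝ (fun i => (⟨_, hmemL i⟩ : L)) := by
      apply LinearIndependent.of_comp (L.subtype)
      exact hu0R
    have h1 : m ≤ finrank ℝ L := by simpa using hw.fintype_card_le_finrank
    have hbZ : LinearIndependent ℤ
        (fun i => (WithLp.toLp 2 (fun j => (b i j : ℝ)) : EuclideanSpace ℝ (Fin (n+1)))) :=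
      hbli.restrict_scalars (by intro r s hrs; simpa using hrs)
    have hbZ' : LinearIndependent ℤ (fun i => (⟨b i, hbmemΛ i⟩ : Λ)) := by
      apply LinearIndependent.of_comp (rc.comp Λ.subtype)
      exact hbZ
    have h2 : g ≤ finrank ℤ Λ := by simpa using hbZ'.fintype_card_le_finrank
    have hfrΛ : finrank ℤ Λ = m := by simpa using Module.finrank_eq_card_basis bN
    omega
  subst hmg
  -- the index equivalence
  have hcard : Fintype.card ((Set.range f)ᶜ : Set (Fin (n+1))) = n + 1 - g := by
    have h1 : Fintype.card (Set.range f) = g := by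
      rw [Set.card_range_of_injective f.injective, Fintype.card_fin]
    rw [Fintype.card_compl_set, h1, Fintype.card_fin]
  let e : (Fin g ⊕ Fin (n+1-g)) ≃ Fin (n+1) :=
    (Equiv.sumCongr (Equiv.ofInjective f f.injective)
      (Fintype.equivFinOfCardEq hcard).symm).trans (Equiv.Set.sumCompl (Set.range f))
  have hel : ∀ i, e (Sum.inl i) = f i := by
    intro i
    simp [e]
  -- the adapted basis and matrices
  let bA : Basis (Fin g ⊕ Fin (n+1-g)) ℤ (Fin (n+1) → ℤ) := bM2.reindex e.symm
  have hbAl : ∀ i, bA (Sum.inl i) = (bN i : Fin (n+1) → ℤ) := by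
    intro i
    rw [Basis.reindex_apply, Equiv.symm_symm, hel, hbM2]
  let u : Fin g → (Fin (n+1) → ℤ) := fun i => (bN i : Fin (n+1) → ℤ)
  let std : Basis (Fin g ⊕ Fin (n+1-g)) ℤ (Fin (n+1) → ℤ) :=
    (Pi.basisFun ℤ (Fin (n+1))).reindex e.symm
  let A : Matrix (Fin g ⊕ Fin (n+1-g)) (Fin g ⊕ Fin (n+1-g)) ℤ :=
    Matrix.of fun s t => bA s (e t)
  have hA : A = (std.toMatrix bA)ᵀ := by
    ext s t
    simp [A, std, Basis.toMatrix_apply, Basis.repr_reindex_apply, Pi.basisFun_repr]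
  haveI : Invertible (std.toMatrix bA) := std.invertibleToMatrix bA
  haveI hAinv : Invertible A := by rw [hA]; infer_instance
  let B : Matrix (Fin g ⊕ Fin (n+1-g)) (Fin g ⊕ Fin (n+1-g)) ℤ := (A⁻¹)ᵀ
  have hAB : A * Bᵀ = 1 := by
    show A * ((A⁻¹)ᵀ)ᵀ = 1
    rw [transpose_transpose]
    exact mul_inv_of_invertible A
  have hBA : Bᵀ * A = 1 := by
    show ((A⁻¹)ᵀ)ᵀ * A = 1
    rw [transpose_transpose]
    exact inv_mul_of_invertible A
  let v : Fin (n+1-g) → (Fin (n+1) → ℤ) := fun i j => B (Sum.inr i) (e.symm j)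
  have hbAe : ∀ s j, bA s j = A s (e.symm j) := by
    intro s j
    show bA s j = bA s (e (e.symm j))
    rw [Equiv.apply_symm_apply]
  have hpair : ∀ s t, ∑ j, bA s j * B t (e.symm j) = if s = t then 1 else 0 := by
    intro s t
    have h1 : ∑ j, bA s j * B t (e.symm j) = ∑ l, A s l * B t l := by
      rw [← Equiv.sum_comp e.symm (fun l => A s l * B t l)]
      apply Finset.sum_congr rfl
      intro j _
      rw [hbAe]
    rw [h1]
    have h2 := congrFun (congrFun hAB s) t
    rw [Matrix.mul_apply] at h2
    simpa [Matrix.one_apply, Matrix.transpose_apply] using h2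
  -- span equality
  have huliR : LinearIndependent ℝ
      (fun i => (WithLp.toLp 2 (fun j => (u i j : ℝ)) : EuclideanSpace ℝ (Fin (n+1)))) := hu0R
  have hLspan : Submodule.span ℝ (Set.range
      (fun i => (WithLp.toLp 2 (fun j => (u i j : ℝ)) : EuclideanSpace ℝ (Fin (n+1))))) = L := by
    apply Submodule.eq_of_le_of_finrank_eq
    · rw [Submodule.span_le]
      rintro x ⟨i, rfl⟩
      exact (bN i).2
    · have h7 : finrank ℝ (Submodule.span ℝ (Set.range
          (fun i => (WithLp.toLp 2 (fun j => (u i j : ℝ)) : EuclideanSpace ℝ (Fin (n+1)))))) = g := by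
        simpa using finrank_span_eq_card huliR
      exact h7.trans hfrL.symm
  refine ⟨u, v, huliR, fun i => (bN i).2, ?_, ?_, ?_, ?_, ?_⟩
  · -- u spans Λ
    intro z hz
    have hzΛ : z ∈ Λ := hz
    refine ⟨fun i => bN.repr ⟨z, hzΛ⟩ i, ?_⟩
    have hco := congrArg (Submodule.subtype Λ) (Basis.sum_repr bN ⟨z, hzΛ⟩)
    rw [map_sum] at hco
    simp only [_root_.map_smul, Submodule.coe_subtype] at hco
    exact hco.symm
  · -- v is ℝ-linearly independent
    rw [Fintype.linearIndependent_iff]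
    intro r hr i0
    have hrj : ∀ j, ∑ i, r i * (v i j : ℝ) = 0 := by
      intro j
      have := congrArg (fun x : EuclideanSpace ℝ (Fin (n+1)) => x j) hr
      simpa [Finset.sum_apply] using this
    have hkey : ∀ i, ∑ j, ((bA (Sum.inr i0) j : ℤ) : ℝ) * (v i j : ℝ)
        = if i0 = i then 1 else 0 := by
      intro i
      have h1 := hpair (Sum.inr i0) (Sum.inr i)
      have h2 := congrArg (fun q : ℤ => (q : ℝ)) h1
      simp only [Int.cast_sum, Int.cast_mul, apply_ite ((↑) : ℤ → ℝ), Int.cast_one,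
        Int.cast_zero, Sum.inr.injEq] at h2
      exact h2
    calc r i0 = ∑ i, r i * (if i0 = i then 1 else 0) := by
          simp [mul_ite, Finset.sum_ite_eq]
      _ = ∑ i, r i * ∑ j, ((bA (Sum.inr i0) j : ℤ) : ℝ) * (v i j : ℝ) := by
          simp_rw [hkey]
      _ = ∑ j, ((bA (Sum.inr i0) j : ℤ) : ℝ) * ∑ i, r i * (v i j : ℝ) := by
          simp_rw [Finset.mul_sum]
          rw [Finset.sum_comm]
          apply Finset.sum_congr rfl; intro j _
          apply Finset.sum_congr rfl; intro i _
          ring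
      _ = 0 := by simp [hrj]
  · -- v i ∈ Lᗮ
    intro i
    rw [Submodule.mem_orthogonal' L]
    intro x hx
    let φv : EuclideanSpace ℝ (Fin (n+1)) →ₗ[ℝ] ℝ :=
      { toFun := fun x => ∑ j, x j * (v i j : ℝ)
        map_add' := by
          intro x y
          show ∑ j, (x j + y j) * _ = _
          rw [← Finset.sum_add_distrib]
          apply Finset.sum_congr rfl
          intro j _
          ring
        map_smul' := by
          intro c x
          show ∑ j, (c * x j) * _ = c * ∑ j, x j * _
          rw [Finset.mul_sum]
          apply Finset.sum_congr rfl
          intro j _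
          ring }
    have hle : L ≤ LinearMap.ker φv := by
      rw [← hLspan, Submodule.span_le]
      rintro _ ⟨k, rfl⟩
      simp only [SetLike.mem_coe, LinearMap.mem_ker]
      show ∑ j, (u k j : ℝ) * (v i j : ℝ) = 0
      have h1 := hpair (Sum.inl k) (Sum.inr i)
      rw [if_neg (by simp)] at h1
      have h2 := congrArg (fun q : ℤ => (q : ℝ)) h1
      simp only [Int.cast_sum, Int.cast_mul, Int.cast_zero] at h2
      rw [← h2]
      apply Finset.sum_congr rfl
      intro j _
      rw [hbAl]
    have h3 := hle hx
    rw [LinearMap.mem_ker] at h3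
    rw [PiLp.inner_apply]
    simp only [RCLike.inner_apply, conj_trivial]
    rw [← h3]
    apply Finset.sum_congr rfl
    intro j _
    show x j * (v i j : ℝ) = x j * (v i j : ℝ)
    ring
  · -- v spans Λ⊥
    intro z hz
    have hdl : ∀ k, (A.mulVec (fun l => z (e l))) (Sum.inl k) = 0 := by
      intro k
      have h1 : (WithLp.toLp 2 (fun j => (u k j : ℝ)) : EuclideanSpace ℝ (Fin (n+1))) ∈ L := (bN k).2
      have h2 := (Submodule.mem_orthogonal L _).mp hz _ h1
      rw [PiLp.inner_apply] at h2
      simp only [RCLike.inner_apply, conj_trivial] at h2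
      have h3 : ((∑ j, u k j * z j : ℤ) : ℝ) = 0 := by
        push_cast
        rw [← h2]; exact Finset.sum_congr rfl fun j _ => mul_comm _ _
      have h4 : (∑ j, u k j * z j : ℤ) = 0 := by exact_mod_cast h3
      show ∑ l, A (Sum.inl k) l * z (e l) = 0
      rw [← h4, ← Equiv.sum_comp e (fun j => u k j * z j)]
      apply Finset.sum_congr rfl
      intro l _
      show A (Sum.inl k) l * z (e l) = u k (e l) * z (e l)
      congr 1
      show bA (Sum.inl k) (e l) = u k (e l)
      rw [hbAl]
    refine ⟨fun i => (A.mulVec (fun l => z (e l))) (Sum.inr i), ?_⟩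
    have hz' : Bᵀ.mulVec (A.mulVec (fun l => z (e l))) = (fun l => z (e l)) := by
      rw [Matrix.mulVec_mulVec, hBA, Matrix.one_mulVec]
    funext j
    have h5 := congrFun hz' (e.symm j)
    rw [Matrix.mulVec, dotProduct] at h5
    rw [Equiv.apply_symm_apply] at h5
    rw [Fintype.sum_sum_type] at h5
    simp only [Matrix.transpose_apply] at h5
    rw [Finset.sum_eq_zero (fun k _ => by rw [hdl k, mul_zero])] at h5
    rw [zero_add] at h5
    rw [← h5]
    simp only [Finset.sum_apply, Pi.smul_apply, smul_eq_mul]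
    apply Finset.sum_congr rfl
    intro i _
    show B (Sum.inr i) (e.symm j) * _ = _ * v i j
    rw [mul_comm]
  · -- Gram determinants
    let GU : Matrix (Fin g) (Fin g) ℤ :=
      Matrix.of fun i i' => ∑ l, A (Sum.inl i) l * A (Sum.inl i') l
    let GV : Matrix (Fin (n+1-g)) (Fin (n+1-g)) ℤ :=
      Matrix.of fun i i' => ∑ l, B (Sum.inr i) l * B (Sum.inr i') l
    let M : Matrix (Fin g ⊕ Fin (n+1-g)) (Fin g ⊕ Fin (n+1-g)) ℤ :=
      Matrix.of (Sum.elim (fun i l => A (Sum.inl i) l) (fun i l => B (Sum.inr i) l))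
    have hMtop : ∀ i l, M (Sum.inl i) l = A (Sum.inl i) l := fun i l => rfl
    have hMbot : ∀ i l, M (Sum.inr i) l = B (Sum.inr i) l := fun i l => rfl
    have hMA_bot : ∀ i t, (M * Aᵀ) (Sum.inr i) t = (1 : Matrix (Fin g ⊕ Fin (n+1-g)) (Fin g ⊕ Fin (n+1-g)) ℤ) t (Sum.inr i) := by
      intro i t
      rw [← hAB, Matrix.mul_apply, Matrix.mul_apply]
      apply Finset.sum_congr rfl
      intro l _
      rw [hMbot, Matrix.transpose_apply, Matrix.transpose_apply, mul_comm]
    have hMB_top : ∀ i t, (M * Bᵀ) (Sum.inl i) t = (1 : Matrix (Fin g ⊕ Fin (n+1-g)) (Fin g ⊕ Fin (n+1-g)) ℤ) (Sum.inl i) t := by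
      intro i t
      rw [← hAB, Matrix.mul_apply, Matrix.mul_apply]
      apply Finset.sum_congr rfl
      intro l _
      rw [hMtop]
    have hMA : M * Aᵀ = Matrix.fromBlocks GU
        (Matrix.of fun i i' => ∑ l, A (Sum.inl i) l * A (Sum.inr i') l) 0 1 := by
      ext s t
      cases s with
      | inl i =>
        cases t with
        | inl i' =>
          simp only [Matrix.fromBlocks_apply₁₁, Matrix.mul_apply, Matrix.of_apply]
          apply Finset.sum_congr rfl
          intro l _
          rw [hMtop, Matrix.transpose_apply]
        | inr i' =>
          simp only [Matrix.fromBlocks_apply₁₂, Matrix.mul_apply, Matrix.of_apply]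
          apply Finset.sum_congr rfl
          intro l _
          rw [hMtop, Matrix.transpose_apply]
      | inr i =>
        cases t with
        | inl i' =>
          rw [hMA_bot, Matrix.fromBlocks_apply₂₁]
          simp [Matrix.one_apply]
        | inr i' =>
          rw [hMA_bot, Matrix.fromBlocks_apply₂₂]
          simp [Matrix.one_apply, eq_comm]
    have hMB : M * Bᵀ = Matrix.fromBlocks 1 0
        (Matrix.of fun i i' => ∑ l, B (Sum.inr i) l * B (Sum.inl i') l) GV := by
      ext s t
      cases s with
      | inl i =>
        cases t with
        | inl i' =>
          rw [hMB_top, Matrix.fromBlocks_apply₁₁]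
          simp [Matrix.one_apply]
        | inr i' =>
          rw [hMB_top, Matrix.fromBlocks_apply₁₂]
          simp [Matrix.one_apply]
      | inr i =>
        cases t with
        | inl i' =>
          simp only [Matrix.fromBlocks_apply₂₁, Matrix.mul_apply, Matrix.of_apply]
          apply Finset.sum_congr rfl
          intro l _
          rw [hMbot, Matrix.transpose_apply]
        | inr i' =>
          simp only [Matrix.fromBlocks_apply₂₂, Matrix.mul_apply, Matrix.of_apply]
          apply Finset.sum_congr rfl
          intro l _
          rw [hMbot, Matrix.transpose_apply]
    have hdet1 : M.det * A.det = GU.det := by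
      calc M.det * A.det = (M * Aᵀ).det := by rw [Matrix.det_mul, Matrix.det_transpose]
        _ = GU.det * (1 : Matrix (Fin (n+1-g)) (Fin (n+1-g)) ℤ).det := by
            rw [hMA, Matrix.det_fromBlocks_zero₂₁]
        _ = GU.det := by rw [Matrix.det_one, mul_one]
    have hdet2 : M.det * B.det = GV.det := by
      calc M.det * B.det = (M * Bᵀ).det := by rw [Matrix.det_mul, Matrix.det_transpose B]
        _ = (1 : Matrix (Fin g) (Fin g) ℤ).det * GV.det := by
            rw [hMB, Matrix.det_fromBlocks_zero₁₂]
        _ = GV.det := by rw [Matrix.det_one, one_mul]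
    have hdAB : A.det * B.det = 1 := by
      have h1 := congrArg Matrix.det hAB
      rwa [Matrix.det_mul, Matrix.det_transpose, Matrix.det_one] at h1
    have hdA : A.det = 1 ∨ A.det = -1 := Int.isUnit_iff.mp (Matrix.isUnit_det_of_invertible A)
    have hdBA : B.det = A.det := by
      rcases hdA with h | h <;> rw [h] at hdAB ⊢ <;> omega
    have hGUV : GU.det = GV.det := by rw [← hdet1, ← hdet2, hdBA]
    have hu_entries : ∀ i i', ∑ j, (u i j : ℝ) * (u i' j : ℝ) = ((GU i i' : ℤ) : ℝ) := by
      intro i i'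
      have h0 : ∑ j, u i j * u i' j = GU i i' := by
        show _ = ∑ l, A (Sum.inl i) l * A (Sum.inl i') l
        rw [← Equiv.sum_comp e (fun j => u i j * u i' j)]
        apply Finset.sum_congr rfl
        intro l _
        show u i (e l) * u i' (e l) = bA (Sum.inl i) (e l) * bA (Sum.inl i') (e l)
        rw [hbAl, hbAl]
      rw [← h0, Int.cast_sum]
      apply Finset.sum_congr rfl
      intro j _
      push_cast
      ring
    have hv_entries : ∀ i i', ∑ j, (v i j : ℝ) * (v i' j : ℝ) = ((GV i i' : ℤ) : ℝ) := by
      intro i i'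
      have h0 : ∑ j, v i j * v i' j = GV i i' := by
        exact Equiv.sum_comp e.symm (fun l => B (Sum.inr i) l * B (Sum.inr i') l)
      rw [← h0, Int.cast_sum]
      apply Finset.sum_congr rfl
      intro j _
      push_cast
      ring
    have hL2 : (Matrix.of fun i i' => ∑ j, (u i j : ℝ) * (u i' j : ℝ))
        = (Int.castRingHom ℝ).mapMatrix GU := by
      ext i i'
      rw [Matrix.of_apply, hu_entries]
      simp [RingHom.mapMatrix_apply]
    have hR2 : (Matrix.of fun i i' => ∑ j, (v i j : ℝ) * (v i' j : ℝ))
        = (Int.castRingHom ℝ).mapMatrix GV := by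
      ext i i'
      rw [Matrix.of_apply, hv_entries]
      simp [RingHom.mapMatrix_apply]
    rw [hL2, hR2, ← RingHom.map_det, ← RingHom.map_det, hGUV]
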